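/- arXiv:0708.1208 — 2 statements merged into one kernel-verified Lean document; each statement's English description precedes it below -/
import Mathlib

section
/- Let φ and ψ be unit vectors in a complex Hilbert space H, and let P_φ = |φ⟩⟨φ| and P_ψ = |ψ⟩⟨ψ| be the corresponding rank-one orthogonal projections. Then the operator norm satisfies ‖P_φ − P_ψ‖ = √(1 − |⟨φ,ψ⟩|²). -/
open scoped InnerProductSpace
open Metric

/-- The rank-one operator `χ ↦ ⟪φ, χ⟫ • φ` (orthogonal projection onto `ℂ φ` when `‖φ‖ = 1`). -/
noncomputable def proj (H : Type) [NormedAddCommGroup H] [InnerProductSpace ℂ H] (φ : H) :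
    H →L[ℂ] H := (innerSL ℂ φ).smulRight φ

/-- Equivalence of unit vectors up to a phase factor. -/
def phaseSetoid (H : Type) [NormedAddCommGroup H] [InnerProductSpace ℂ H] :
    Setoid (sphere (0 : H) 1) where
  r φ ψ := ∃ c : ℂ, ‖c‖ = 1 ∧ (φ : H) = c • (ψ : H)
  iseqv := by
    constructor
    · intro φ; exact ⟨1, by simp⟩
    · rintro φ ψ ⟨c, hc, h⟩
      have hc0 : c ≠ 0 := by intro h0; simp [h0] at hc
      exact ⟨c⁻¹, by simp [hc], by rw [h, smul_smul, inv_mul_cancel₀ hc0, one_smul]⟩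
    · rintro φ ψ ξ ⟨c, hc, h⟩ ⟨d, hd, h'⟩
      exact ⟨c * d, by simp [hc, hd], by rw [h, h', smul_smul]⟩

lemma scalar_key (x y a : ℂ) :
    ‖x‖ ^ 2 + ‖y‖ ^ 2 - 2 * ((starRingEnd ℂ x * y * a).re)
      = (1 - ‖a‖ ^ 2) * ‖x‖ ^ 2 + ‖y - starRingEnd ℂ a * x‖ ^ 2 := by
  simp only [Complex.sq_norm, Complex.normSq_apply, Complex.mul_re,
    Complex.mul_im, Complex.sub_re, Complex.sub_im, Complex.conj_re, Complex.conj_im]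
  ring

/-- For unit vectors `φ, ψ`, the operator norm of the difference of the
rank-one projections is `‖P_φ − P_ψ‖ = √(1 − |⟪φ,ψ⟫|²)`. -/
theorem stmt3 (H : Type) [NormedAddCommGroup H] [InnerProductSpace ℂ H] [CompleteSpace H]
    (φ ψ : H) (hφ : ‖φ‖ = 1) (hψ : ‖ψ‖ = 1) :
    ‖proj H φ - proj H ψ‖ = Real.sqrt (1 - ‖⟪φ, ψ⟫_ℂ‖ ^ 2) := by
  set a : ℂ := ⟪φ, ψ⟫_ℂ with ha
  have hφφ : ⟪φ, φ⟫_ℂ = 1 := by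
    rw [inner_self_eq_norm_sq_to_K, hφ]; norm_num
  have hψψ : ⟪ψ, ψ⟫_ℂ = 1 := by
    rw [inner_self_eq_norm_sq_to_K, hψ]; norm_num
  have hψφ : ⟪ψ, φ⟫_ℂ = starRingEnd ℂ a := by rw [← inner_conj_symm]
  have ha1 : ‖a‖ ≤ 1 := by
    calc ‖a‖ ≤ ‖φ‖ * ‖ψ‖ := norm_inner_le_norm _ _
    _ = 1 := by rw [hφ, hψ]; ring
  have hs0 : (0:ℝ) ≤ 1 - ‖a‖ ^ 2 := by nlinarith [norm_nonneg a]
  set s := Real.sqrt (1 - ‖a‖ ^ 2) with hsdef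
  have hs2 : s ^ 2 = 1 - ‖a‖ ^ 2 := Real.sq_sqrt hs0
  have happ : ∀ χ : H, (proj H φ - proj H ψ) χ = ⟪φ, χ⟫_ℂ • φ - ⟪ψ, χ⟫_ℂ • ψ := by
    intro χ; simp [proj]
  -- key identity
  have key : ∀ χ : H, ‖(proj H φ - proj H ψ) χ‖ ^ 2
      = (1 - ‖a‖ ^ 2) * ‖⟪φ, χ⟫_ℂ‖ ^ 2
        + ‖⟪ψ, χ⟫_ℂ - starRingEnd ℂ a * ⟪φ, χ⟫_ℂ‖ ^ 2 := by
    intro χ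
    rw [happ χ, @norm_sub_sq ℂ]
    rw [inner_smul_left, inner_smul_right, norm_smul, norm_smul, hφ, hψ]
    rw [← scalar_key ⟪φ, χ⟫_ℂ ⟪ψ, χ⟫_ℂ a]
    simp only [RCLike.re_to_complex, mul_one, ← ha]
    ring_nf
  apply le_antisymm
  · refine ContinuousLinearMap.opNorm_le_bound _ (Real.sqrt_nonneg _) ?_
    intro χ
    set x := ⟪φ, χ⟫_ℂ with hx
    set y := ⟪ψ, χ⟫_ℂ with hy
    have hperp : ⟪ψ - a • φ, χ - x • φ⟫_ℂ = y - starRingEnd ℂ a * x := by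
      simp only [inner_sub_left, inner_sub_right, inner_smul_left, inner_smul_right,
        hφφ, hψφ, ← hx, ← hy]
      ring
    have hnψ : ‖ψ - a • φ‖ ^ 2 = 1 - ‖a‖ ^ 2 := by
      rw [@norm_sub_sq ℂ, inner_smul_right, norm_smul, hψ, hφ, hψφ]
      simp only [RCLike.re_to_complex, mul_one, Complex.mul_conj]
      rw [Complex.ofReal_re, Complex.normSq_eq_norm_sq]
      ring
    have hnχ : ‖χ - x • φ‖ ^ 2 = ‖χ‖ ^ 2 - ‖x‖ ^ 2 := by
      have hχφ : ⟪χ, φ⟫_ℂ = starRingEnd ℂ x := by rw [hx, ← inner_conj_symm]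
      rw [@norm_sub_sq ℂ, inner_smul_right, norm_smul, hφ, hχφ]
      simp only [RCLike.re_to_complex, mul_one, Complex.mul_conj]
      rw [Complex.ofReal_re, Complex.normSq_eq_norm_sq]
      ring
    have hcs : ‖y - starRingEnd ℂ a * x‖ ^ 2 ≤ (1 - ‖a‖ ^ 2) * (‖χ‖ ^ 2 - ‖x‖ ^ 2) := by
      have h1 := norm_inner_le_norm (𝕜 := ℂ) (ψ - a • φ) (χ - x • φ)
      rw [hperp] at h1
      have h2 : ‖y - starRingEnd ℂ a * x‖ ^ 2 ≤ (‖ψ - a • φ‖ * ‖χ - x • φ‖) ^ 2 := by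
        have := mul_self_le_mul_self (norm_nonneg _) h1
        simpa [pow_two] using this
      calc ‖y - starRingEnd ℂ a * x‖ ^ 2 ≤ (‖ψ - a • φ‖ * ‖χ - x • φ‖) ^ 2 := h2
        _ = (1 - ‖a‖ ^ 2) * (‖χ‖ ^ 2 - ‖x‖ ^ 2) := by rw [mul_pow, hnψ, hnχ]
    have hxχ : ‖x‖ ^ 2 ≤ ‖χ‖ ^ 2 := by
      have := norm_inner_le_norm (𝕜 := ℂ) φ χ
      rw [hφ, one_mul] at this
      exact pow_le_pow_left₀ (norm_nonneg _) this 2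
    have hsq : ‖(proj H φ - proj H ψ) χ‖ ^ 2 ≤ (s * ‖χ‖) ^ 2 := by
      rw [key χ, mul_pow, hs2, ← hx, ← hy]
      nlinarith [hcs]
    have h1 := Real.sqrt_le_sqrt hsq
    rwa [Real.sqrt_sq (norm_nonneg _), Real.sqrt_sq (by positivity)] at h1
  · have hTφ : ‖(proj H φ - proj H ψ) φ‖ = s := by
      have h := key φ
      rw [hφφ, hψφ] at h
      simp only [mul_one, sub_self, norm_zero, norm_one, one_pow] at h
      have h' : ‖(proj H φ - proj H ψ) φ‖ ^ 2 = 1 - ‖a‖ ^ 2 := by rw [h]; ring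
      rw [hsdef, ← h', Real.sqrt_sq (norm_nonneg _)]
    calc s = ‖(proj H φ - proj H ψ) φ‖ := hTφ.symm
      _ ≤ ‖proj H φ - proj H ψ‖ := (proj H φ - proj H ψ).unit_le_opNorm φ (le_of_eq hφ)
end

section
/- Let ∂S(H) be the set of rank-one orthogonal projections on a complex Hilbert space H. The initial topology 𝒯₀ generated by the transition-probability functions h_Q(P) = tr(PQ), Q ∈ ∂S(H), coincides with the metric topology induced by the operator norm: 𝒯₀ = 𝒯_n. -/
open scoped InnerProductSpace
open Metric

/-- The set of rank-one orthogonal projections (pure states) on `H`. -/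
abbrev PureState (H : Type) [NormedAddCommGroup H] [InnerProductSpace ℂ H] : Type :=
  {P : H →L[ℂ] H // ∃ φ : H, ‖φ‖ = 1 ∧ P = proj H φ}

/-- The transition probability `h_Q(P) = tr(PQ) = ⟪φ, P φ⟫` where `Q = |φ⟩⟨φ|`. -/
noncomputable def transProb (H : Type) [NormedAddCommGroup H] [InnerProductSpace ℂ H]
    (P Q : PureState H) : ℝ :=
  (⟪Q.2.choose, (P : H →L[ℂ] H) Q.2.choose⟫_ℂ).re

/-- The weak topology `𝒯₀` on the pure states: the coarsest topology making every
transition-probability function `P ↦ h_Q(P) = tr(PQ)` continuous. -/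
noncomputable def weakTop (H : Type) [NormedAddCommGroup H] [InnerProductSpace ℂ H] :
    TopologicalSpace (PureState H) :=
  ⨅ Q : PureState H, TopologicalSpace.induced (fun P => transProb H P Q) inferInstance

variable (H : Type) [NormedAddCommGroup H] [InnerProductSpace ℂ H]

lemma proj_apply (φ χ : H) : proj H φ χ = ⟪φ, χ⟫_ℂ • φ := rfl

lemma proj_smul (c : ℂ) (hc : ‖c‖ = 1) (ψ : H) : proj H (c • ψ) = proj H ψ := by
  ext χ
  simp only [proj_apply, inner_smul_left, smul_smul]
  have h1 : c * (starRingEnd ℂ) c = 1 := by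
    rw [Complex.mul_conj]
    norm_cast
    simp [Complex.normSq_eq_norm_sq, hc]
  rw [mul_comm _ c, ← mul_assoc, h1, one_mul]

lemma norm_proj_sub_le (φ ψ : H) (hφ : ‖φ‖ = 1) (hψ : ‖ψ‖ = 1) :
    ‖proj H φ - proj H ψ‖ ^ 2 ≤ 8 * (1 - ‖⟪φ, ψ⟫_ℂ‖ ^ 2) := by
  set z := ⟪φ, ψ⟫_ℂ with hz
  set t := ‖z‖ with ht
  have ht1 : t ≤ 1 := by
    simpa [hφ, hψ] using norm_inner_le_norm (𝕜 := ℂ) φ ψ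
  have ht0 : 0 ≤ t := norm_nonneg _
  set c : ℂ := if z = 0 then 1 else (t : ℂ) / z with hc
  have hcn : ‖c‖ = 1 := by
    by_cases h : z = 0
    · simp [hc, h]
    · have htne : t ≠ 0 := by simpa [ht] using norm_ne_zero_iff.mpr h
      rw [hc, if_neg h, norm_div, Complex.norm_real, Real.norm_of_nonneg ht0, ← ht, div_self htne]
  have hct : c * z = (t : ℂ) := by
    by_cases h : z = 0
    · simp [hc, h, ht]
    · rw [hc, if_neg h]; field_simp
  set ψ' := c • ψ with hψ'
  have hψ'n : ‖ψ'‖ = 1 := by simp [hψ', norm_smul, hcn, hψ]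
  have hproj : proj H ψ' = proj H ψ := proj_smul H c hcn ψ
  have hip : ⟪φ, ψ'⟫_ℂ = (t : ℂ) := by
    rw [hψ', inner_smul_right, ← hz, hct]
  -- norm of difference of vectors
  have hdiff : ‖φ - ψ'‖ ^ 2 = 2 - 2 * t := by
    have := @norm_sub_sq ℂ H _ _ _ φ ψ'
    rw [hip] at this
    simp [this, hφ, hψ'n]
    ring
  -- operator bound
  have hop : ‖proj H φ - proj H ψ'‖ ≤ 2 * ‖φ - ψ'‖ := by
    apply ContinuousLinearMap.opNorm_le_bound
    · positivity
    intro χ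
    have key : (proj H φ - proj H ψ') χ = ⟪φ - ψ', χ⟫_ℂ • φ + ⟪ψ', χ⟫_ℂ • (φ - ψ') := by
      simp only [ContinuousLinearMap.sub_apply, proj_apply, inner_sub_left]
      module
    rw [key]
    calc ‖⟪φ - ψ', χ⟫_ℂ • φ + ⟪ψ', χ⟫_ℂ • (φ - ψ')‖
        ≤ ‖⟪φ - ψ', χ⟫_ℂ • φ‖ + ‖⟪ψ', χ⟫_ℂ • (φ - ψ')‖ := norm_add_le _ _
      _ ≤ ‖φ - ψ'‖ * ‖χ‖ * ‖φ‖ + ‖ψ'‖ * ‖χ‖ * ‖φ - ψ'‖ := by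
          rw [norm_smul, norm_smul]
          gcongr <;> exact norm_inner_le_norm _ _
      _ = 2 * ‖φ - ψ'‖ * ‖χ‖ := by rw [hφ, hψ'n]; ring
  have h1 : ‖proj H φ - proj H ψ‖ ^ 2 ≤ 4 * (2 - 2 * t) := by
    rw [← hproj]
    calc ‖proj H φ - proj H ψ'‖ ^ 2 ≤ (2 * ‖φ - ψ'‖) ^ 2 := by
          apply pow_le_pow_left₀ (norm_nonneg _) hop
      _ = 4 * (2 - 2 * t) := by rw [mul_pow, hdiff]; norm_num
  have h2 : 4 * (2 - 2 * t) ≤ 8 * (1 - t ^ 2) := by nlinarith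
  linarith

lemma transProb_eq (H : Type) [NormedAddCommGroup H] [InnerProductSpace ℂ H]
    (P Q : PureState H) (φ : H) (hP : P.1 = proj H φ) :
    transProb H P Q = ‖⟪φ, Q.2.choose⟫_ℂ‖ ^ 2 := by
  unfold transProb
  rw [hP, proj_apply, inner_smul_right, ← inner_conj_symm Q.2.choose φ, Complex.mul_conj]
  norm_cast
  simp [Complex.normSq_eq_norm_sq]


/-- On the set of rank-one projections, the weak topology `𝒯₀` generated by
the transition-probability functions coincides with the topology induced by the operator
norm. -/
theorem stmt15 (H : Type) [NormedAddCommGroup H] [InnerProductSpace ℂ H] [CompleteSpace H] :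
    weakTop H = (inferInstance : TopologicalSpace (PureState H)) := by
  refine le_antisymm ?_ (le_iInf fun Q => ?_)
  · refine le_of_nhds_le_nhds fun P₀ => ?_
    rw [(Metric.nhds_basis_ball).ge_iff]
    intro ε hε
    obtain ⟨hψ, hP₀⟩ := P₀.2.choose_spec
    set ψ := P₀.2.choose with hψdef
    set U : Set (PureState H) := (fun P => transProb H P P₀) ⁻¹' Set.Ioi (1 - ε ^ 2 / 8)
      with hU
    have hUopen : @IsOpen _ (weakTop H) U := by
      have h1 : @IsOpen _ (TopologicalSpace.induced (fun P => transProb H P P₀)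
          inferInstance) U := isOpen_induced isOpen_Ioi
      exact h1.mono (iInf_le _ P₀)
    have hmem : P₀ ∈ U := by
      have : transProb H P₀ P₀ = ‖⟪ψ, ψ⟫_ℂ‖ ^ 2 := transProb_eq H P₀ P₀ ψ hP₀
      have h2 : ⟪ψ, ψ⟫_ℂ = ((1 : ℝ) : ℂ) := by
        rw [inner_self_eq_norm_sq_to_K, hψ]; norm_num
      have h3 : transProb H P₀ P₀ = 1 := by rw [this, h2]; norm_num
      simp only [hU, Set.mem_preimage, Set.mem_Ioi, h3]
      nlinarith
    refine Filter.mem_of_superset (@IsOpen.mem_nhds (PureState H) (weakTop H) P₀ U hUopen hmem) ?_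
    intro P hP
    obtain ⟨φ, hφ, hPproj⟩ := P.2
    have htp : transProb H P P₀ = ‖⟪φ, ψ⟫_ℂ‖ ^ 2 := transProb_eq H P P₀ φ hPproj
    have hb := norm_proj_sub_le H φ ψ hφ hψ
    have hPlt : 1 - ε ^ 2 / 8 < transProb H P P₀ := hP
    have hsq : ‖proj H φ - proj H ψ‖ ^ 2 < ε ^ 2 := by nlinarith
    have : ‖proj H φ - proj H ψ‖ < ε := lt_of_pow_lt_pow_left₀ 2 hε.le hsq
    rw [mem_ball, Subtype.dist_eq, dist_eq_norm, hPproj, hP₀]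
    exact this
  · refine continuous_iff_le_induced.mp ?_
    exact Complex.continuous_re.comp (Continuous.inner continuous_const
      (((ContinuousLinearMap.apply ℂ H Q.2.choose).continuous).comp continuous_subtype_val))
end
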